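/- Let S, N_B, N_C be positive integers, let R ∈ ℝ^{(S·N_B)×(S·N_C)} be block-circulant of order S with N_B×N_C blocks, and let μ > 0. Then the matrix RᵀR + μ·I_{S·N_C} is invertible and the controller gain matrix K = (RᵀR + μ·I_{S·N_C})⁻¹·Rᵀ ∈ ℝ^{(S·N_C)×(S·N_B)} is block-circulant of order S with N_C×N_B blocks. -/

import Mathlib

open scoped Fin.NatCast
open Matrix Kronecker

/-- The cyclic shift permutation matrix `Ω_n` with `(Ω_n)_{i,j} = 1` iff `j ≡ i+1 (mod n)`. -/
def cyclicShift (n : ℕ) : Matrix (Fin n) (Fin n) ℝ :=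
  Matrix.of fun i j => if (j : ℕ) = ((i : ℕ) + 1) % n then 1 else 0

/-- A block matrix is block-circulant of order `n` with `p × m` blocks if
`B = Σ_{k=0}^{n−1} Ω_n^k ⊗ b_k` for some blocks `b_k`. -/
def IsBlockCirculant {n p m : ℕ} (B : Matrix (Fin n × Fin p) (Fin n × Fin m) ℝ) : Prop :=
  ∃ b : Fin n → Matrix (Fin p) (Fin m) ℝ,
    B = ∑ k : Fin n, (cyclicShift n ^ (k : ℕ)) ⊗ₖ b k

lemma cyclicShift_apply {n : ℕ} [NeZero n] (i j : Fin n) :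
    cyclicShift n i j = if j = i + 1 then 1 else 0 := by
  have key : ((j : ℕ) = ((i : ℕ) + 1) % n) ↔ (j = i + 1) := by
    rw [Fin.ext_iff, Fin.val_add, Fin.val_one']
    have h2 : ((i : ℕ) + 1) % n = ((i : ℕ) + 1 % n) % n := by
      conv_lhs => rw [Nat.add_mod, Nat.mod_eq_of_lt i.isLt]
    rw [h2]
  simp only [cyclicShift, Matrix.of_apply, key]

lemma cyclicShift_pow_apply {n : ℕ} [NeZero n] (k : ℕ) :
    ∀ (i j : Fin n), (cyclicShift n ^ k) i j = if j = i + (k : Fin n) then 1 else 0 := by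
  induction k with
  | zero => intro i j; simp [Matrix.one_apply, eq_comm]
  | succ k ih =>
    intro i j
    rw [pow_succ, Matrix.mul_apply]
    simp only [ih, cyclicShift_apply, ite_mul, one_mul, zero_mul]
    rw [Finset.sum_ite_eq' Finset.univ (i + (k : Fin n))
      (fun x => if j = x + 1 then (1 : ℝ) else 0)]
    simp [add_assoc]

lemma cyclicShift_transpose_mul {n : ℕ} [NeZero n] :
    (cyclicShift n)ᵀ * cyclicShift n = 1 := by
  ext i j
  rw [Matrix.mul_apply]
  simp only [Matrix.transpose_apply, cyclicShift_apply, Matrix.one_apply]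
  have hcond : ∀ x : Fin n, (i = x + 1) = (x = i - 1) := by
    intro x
    rw [eq_iff_iff]
    constructor
    · rintro rfl; rw [add_sub_cancel_right]
    · rintro rfl; rw [sub_add_cancel]
  simp only [hcond, ite_mul, one_mul, zero_mul]
  rw [Finset.sum_ite_eq' Finset.univ (i - 1) (fun x => if j = x + 1 then (1 : ℝ) else 0)]
  simp [sub_add_cancel, eq_comm]

lemma sum_kron_apply {n p m : ℕ} [NeZero n] (b : Fin n → Matrix (Fin p) (Fin m) ℝ)
    (i : Fin n) (a : Fin p) (j : Fin n) (c : Fin m) :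
    (∑ k : Fin n, (cyclicShift n ^ (k : ℕ)) ⊗ₖ b k) (i, a) (j, c) = b (j - i) a c := by
  simp only [Matrix.sum_apply, Matrix.kroneckerMap_apply, cyclicShift_pow_apply,
    Fin.cast_val_eq_self, ite_mul, one_mul, zero_mul]
  have hcond : ∀ k : Fin n, (j = i + k) = (k = j - i) := by
    intro k
    rw [eq_iff_iff]
    constructor
    · rintro rfl; rw [add_sub_cancel_left]
    · rintro rfl; rw [add_sub_cancel]
  simp only [hcond]
  rw [Finset.sum_ite_eq' Finset.univ (j - i) (fun k => b k a c)]
  simp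

/-- Forward direction: a block-circulant matrix intertwines the shifts. -/
lemma comm_of_blockCirculant {n p m : ℕ} {B : Matrix (Fin n × Fin p) (Fin n × Fin m) ℝ}
    (hB : IsBlockCirculant B) :
    B * (cyclicShift n ⊗ₖ (1 : Matrix (Fin m) (Fin m) ℝ))
      = (cyclicShift n ⊗ₖ (1 : Matrix (Fin p) (Fin p) ℝ)) * B := by
  obtain ⟨b, rfl⟩ := hB
  rw [Matrix.sum_mul, Matrix.mul_sum]
  refine Finset.sum_congr rfl fun k _ => ?_
  rw [← Matrix.mul_kronecker_mul, ← Matrix.mul_kronecker_mul, Matrix.mul_one, Matrix.one_mul,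
    ← pow_succ, ← pow_succ']

/-- Converse direction: a matrix intertwining the shifts is block-circulant. -/
lemma blockCirculant_of_comm {n p m : ℕ} [NeZero n]
    {B : Matrix (Fin n × Fin p) (Fin n × Fin m) ℝ}
    (h : B * (cyclicShift n ⊗ₖ (1 : Matrix (Fin m) (Fin m) ℝ))
      = (cyclicShift n ⊗ₖ (1 : Matrix (Fin p) (Fin p) ℝ)) * B) :
    IsBlockCirculant B := by
  -- entrywise shift property
  have key : ∀ (i : Fin n) (a : Fin p) (j : Fin n) (c : Fin m),
      B (i + 1, a) (j + 1, c) = B (i, a) (j, c) := by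
    intro i a j c
    have h1 := congrFun (congrFun h (i, a)) (j + 1, c)
    rw [Matrix.mul_apply, Matrix.mul_apply] at h1
    rw [Fintype.sum_prod_type] at h1
    rw [Fintype.sum_prod_type] at h1
    have hL : (∑ k : Fin n, ∑ c' : Fin m,
        B (i, a) (k, c') * (cyclicShift n ⊗ₖ (1 : Matrix (Fin m) (Fin m) ℝ)) (k, c') (j + 1, c))
        = B (i, a) (j, c) := by
      have : ∀ k : Fin n, ∀ c' : Fin m,
          B (i, a) (k, c') * (cyclicShift n ⊗ₖ (1 : Matrix (Fin m) (Fin m) ℝ)) (k, c') (j + 1, c)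
          = if c' = c then (if k = j then B (i, a) (k, c') else 0) else 0 := by
        intro k c'
        simp only [Matrix.kroneckerMap_apply, cyclicShift_apply, Matrix.one_apply]
        by_cases h1 : k = j
        · subst h1
          by_cases h2 : c' = c <;> simp [h2]
        · have h3 : j + 1 ≠ k + 1 := fun hh => h1 ((add_left_injective 1 hh).symm)
          by_cases h2 : c' = c <;> simp [h1, h2, h3]
      simp only [this, Finset.sum_ite_eq', Finset.mem_univ, ite_true]
    have hR : (∑ k : Fin n, ∑ a' : Fin p,
        (cyclicShift n ⊗ₖ (1 : Matrix (Fin p) (Fin p) ℝ)) (i, a) (k, a') * B (k, a') (j + 1, c))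
        = B (i + 1, a) (j + 1, c) := by
      have : ∀ k : Fin n, ∀ a' : Fin p,
          (cyclicShift n ⊗ₖ (1 : Matrix (Fin p) (Fin p) ℝ)) (i, a) (k, a') * B (k, a') (j + 1, c)
          = if a' = a then (if k = i + 1 then B (k, a') (j + 1, c) else 0) else 0 := by
        intro k a'
        simp only [Matrix.kroneckerMap_apply, cyclicShift_apply, Matrix.one_apply]
        by_cases h1 : k = i + 1 <;> by_cases h2 : a' = a
        · subst h2; simp [h1]
        · simp [h1, h2, Ne.symm h2]
        · subst h2; simp [h1]
        · simp [h1, h2, Ne.symm h2]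
      simp only [this, Finset.sum_ite_eq', Finset.mem_univ, ite_true]
    rw [hL, hR] at h1
    exact h1.symm
  have key2 : ∀ (t : ℕ) (i : Fin n) (a : Fin p) (j : Fin n) (c : Fin m),
      B (i + (t : Fin n), a) (j + (t : Fin n), c) = B (i, a) (j, c) := by
    intro t
    induction t with
    | zero => simp
    | succ t ih =>
      intro i a j c
      have : ((t + 1 : ℕ) : Fin n) = (t : Fin n) + 1 := by push_cast; ring
      rw [this, ← add_assoc, ← add_assoc, key, ih]
  refine ⟨fun k => Matrix.of fun a c => B (0, a) (k, c), ?_⟩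
  ext ⟨i, a⟩ ⟨j, c⟩
  rw [sum_kron_apply]
  have := key2 (i : ℕ) 0 a (j - i) c
  simp only [Fin.cast_val_eq_self, zero_add, sub_add_cancel] at this
  simpa [Matrix.of_apply] using this

/-- **The controller gain matrix of a block-circulant orbit response matrix is
block-circulant.** If `R ∈ BC(S, N_B, N_C)` and `μ > 0`, then `RᵀR + μ·I` is invertible and
`K = (RᵀR + μ·I)⁻¹·Rᵀ ∈ BC(S, N_C, N_B)`. -/
theorem gain_matrix_blockCirculant
    (S N_B N_C : ℕ) (hS : 0 < S) (hNB : 0 < N_B) (hNC : 0 < N_C)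
    (R : Matrix (Fin S × Fin N_B) (Fin S × Fin N_C) ℝ)
    (hR : IsBlockCirculant R)
    (μ : ℝ) (hμ : 0 < μ) :
    IsUnit (Rᵀ * R + μ • (1 : Matrix (Fin S × Fin N_C) (Fin S × Fin N_C) ℝ)) ∧
    IsBlockCirculant
      ((Rᵀ * R + μ • (1 : Matrix (Fin S × Fin N_C) (Fin S × Fin N_C) ℝ))⁻¹ * Rᵀ) := by
  haveI : NeZero S := ⟨hS.ne'⟩
  set Ω := cyclicShift S with hΩ
  set UB : Matrix (Fin S × Fin N_B) (Fin S × Fin N_B) ℝ := Ω ⊗ₖ 1 with hUB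
  set UC : Matrix (Fin S × Fin N_C) (Fin S × Fin N_C) ℝ := Ω ⊗ₖ 1 with hUC
  set A := Rᵀ * R + μ • (1 : Matrix (Fin S × Fin N_C) (Fin S × Fin N_C) ℝ) with hA
  -- invertibility of A
  have hApd : A.PosDef := by
    have h1 : (Rᵀ * R).PosSemidef := by
      have := Matrix.posSemidef_conjTranspose_mul_self R
      rwa [Matrix.conjTranspose_eq_transpose_of_trivial] at this
    have h2 : (μ • (1 : Matrix (Fin S × Fin N_C) (Fin S × Fin N_C) ℝ)).PosDef := by
      rw [Matrix.smul_one_eq_diagonal]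
      exact Matrix.posDef_diagonal_iff.mpr fun _ => hμ
    exact Matrix.PosDef.posSemidef_add h1 h2
  have hAunit : IsUnit A := hApd.isUnit
  have hAdet : IsUnit A.det := (Matrix.isUnit_iff_isUnit_det A).mp hAunit
  refine ⟨hAunit, ?_⟩
  -- shift intertwining facts
  have hcomm : R * UC = UB * R := comm_of_blockCirculant hR
  have hΩorth : Ωᵀ * Ω = 1 := cyclicShift_transpose_mul
  have hΩorth' : Ω * Ωᵀ = 1 := mul_eq_one_comm.mp hΩorth
  have hUBt : UBᵀ = Ωᵀ ⊗ₖ 1 := by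
    rw [hUB, ← Matrix.kroneckerMap_transpose, Matrix.transpose_one]
  have hUCt : UCᵀ = Ωᵀ ⊗ₖ 1 := by
    rw [hUC, ← Matrix.kroneckerMap_transpose, Matrix.transpose_one]
  have hUBo : UBᵀ * UB = 1 := by
    rw [hUBt, hUB, ← Matrix.mul_kronecker_mul, hΩorth, Matrix.one_mul, Matrix.one_kronecker_one]
  have hUCo : UC * UCᵀ = 1 := by
    rw [hUCt, hUC, ← Matrix.mul_kronecker_mul, hΩorth', Matrix.one_mul, Matrix.one_kronecker_one]
  have hcommT : UCᵀ * Rᵀ = Rᵀ * UBᵀ := by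
    rw [← Matrix.transpose_mul, ← Matrix.transpose_mul, hcomm]
  have hRT : Rᵀ * UB = UC * Rᵀ := by
    calc Rᵀ * UB = (UC * UCᵀ) * Rᵀ * UB := by rw [hUCo, Matrix.one_mul]
    _ = UC * (UCᵀ * Rᵀ) * UB := by rw [Matrix.mul_assoc UC UCᵀ Rᵀ]
    _ = UC * (Rᵀ * UBᵀ) * UB := by rw [hcommT]
    _ = UC * Rᵀ * (UBᵀ * UB) := by rw [Matrix.mul_assoc, Matrix.mul_assoc, Matrix.mul_assoc]
    _ = UC * Rᵀ := by rw [hUBo, Matrix.mul_one]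
  have hAU : A * UC = UC * A := by
    rw [hA, add_mul, mul_add, Matrix.smul_mul, Matrix.mul_smul, Matrix.one_mul, Matrix.mul_one,
      Matrix.mul_assoc, hcomm, ← Matrix.mul_assoc, hRT, Matrix.mul_assoc]
  have hAinvU : A⁻¹ * UC = UC * A⁻¹ := by
    have h1 : A⁻¹ * (A * UC) * A⁻¹ = A⁻¹ * (UC * A) * A⁻¹ := by rw [hAU]
    rw [← Matrix.mul_assoc, ← Matrix.mul_assoc, Matrix.nonsing_inv_mul A hAdet,
      one_mul] at h1
    rw [Matrix.mul_assoc (A⁻¹ * UC) A A⁻¹, Matrix.mul_nonsing_inv A hAdet,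
      Matrix.mul_one] at h1
    exact h1.symm
  apply blockCirculant_of_comm
  show A⁻¹ * Rᵀ * UB = UC * (A⁻¹ * Rᵀ)
  rw [Matrix.mul_assoc, hRT, ← Matrix.mul_assoc, hAinvU, Matrix.mul_assoc]
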